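/- arXiv:2104.07600 — 2 statements merged into one kernel-verified Lean document; each statement's English description precedes it below -/
import Mathlib

section
/- Under the discrete-time networked SEIR flow model with balanced flows and parameters satisfying h β_i^k, h σ_i^k, h δ_i^k ∈ (0,1] with σ_i^k ≥ σ_min > 0 and δ_i^k ≥ δ_min > 0, both the total exposed mass E^k = Σ_i e_i^k and the total infected mass X^k = Σ_i x_i^k converge to 0 as k → ∞; consequently e_i^k → 0 and x_i^k → 0 for every i ∈ [n]. -/
open Finset Filter

/-- Key Lyapunov-type lemma: if `A (k+1) = A k - h * g k` with `A` nonnegative,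
`E` nonnegative and `c * E k ≤ g k` for positive constants `h, c`, then `E → 0`. -/
lemma key_vanish (h c : ℝ) (hh : 0 < h) (hc : 0 < c) (A g E : ℕ → ℝ)
    (hrec : ∀ k, A (k + 1) = A k - h * g k)
    (hA0 : ∀ k, 0 ≤ A k) (hE0 : ∀ k, 0 ≤ E k) (hge : ∀ k, c * E k ≤ g k) :
    Tendsto E atTop (nhds 0) := by
  have hg0 : ∀ k, 0 ≤ g k := fun k => le_trans (mul_nonneg hc.le (hE0 k)) (hge k)
  have hanti : Antitone A := by
    apply antitone_nat_of_succ_le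
    intro k
    rw [hrec k]
    linarith [mul_nonneg hh.le (hg0 k)]
  have hbdd : BddBelow (Set.range A) := ⟨0, by rintro _ ⟨k, rfl⟩; exact hA0 k⟩
  have hAlim : Tendsto A atTop (nhds (⨅ k, A k)) :=
    tendsto_atTop_ciInf hanti hbdd
  have hAlim' : Tendsto (fun k => A (k + 1)) atTop (nhds (⨅ k, A k)) :=
    hAlim.comp (tendsto_add_atTop_nat 1)
  have hglim : Tendsto g atTop (nhds 0) := by
    have : Tendsto (fun k => (A k - A (k + 1)) / h) atTop (nhds 0) := by
      have := (hAlim.sub hAlim').div_const h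
      simpa using this
    refine this.congr (fun k => ?_)
    rw [hrec k]
    field_simp
    ring
  have hle : ∀ k, E k ≤ g k / c := fun k =>
    (le_div_iff₀' hc).mpr (hge k)
  exact squeeze_zero hE0 hle (by simpa using hglim.div_const c)

/-- under the aggregated balanced-flow SEIR dynamics the total exposed
and infected masses tend to zero, hence so does every coordinate. -/
theorem exposed_infected_vanish
    (n : ℕ) (h σmin δmin : ℝ) (hh : 0 < h) (hσmin : 0 < σmin) (hδmin : 0 < δmin)
    (s e x : ℕ → Fin n → ℝ) (β σ δ : ℕ → Fin n → ℝ)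
    (hs01 : ∀ k i, s k i ∈ Set.Icc (0:ℝ) 1)
    (he01 : ∀ k i, e k i ∈ Set.Icc (0:ℝ) 1)
    (hx01 : ∀ k i, x k i ∈ Set.Icc (0:ℝ) 1)
    (hβ : ∀ k i, 0 < h * β k i ∧ h * β k i ≤ 1)
    (hσ : ∀ k i, 0 < h * σ k i ∧ h * σ k i ≤ 1)
    (hδ : ∀ k i, 0 < h * δ k i ∧ h * δ k i ≤ 1)
    (hσlow : ∀ k i, σmin ≤ σ k i)
    (hδlow : ∀ k i, δmin ≤ δ k i)
    (hS : ∀ k, (∑ i, s (k+1) i) = (∑ i, s k i) - h * ∑ i, β k i * x k i * s k i)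
    (hE : ∀ k, (∑ i, e (k+1) i) = (∑ i, e k i)
        + h * ((∑ i, β k i * x k i * s k i) - ∑ i, σ k i * e k i))
    (hX : ∀ k, (∑ i, x (k+1) i) = (∑ i, x k i)
        + h * ((∑ i, σ k i * e k i) - ∑ i, δ k i * x k i)) :
    Tendsto (fun k => ∑ i, e k i) atTop (nhds 0) ∧
    Tendsto (fun k => ∑ i, x k i) atTop (nhds 0) ∧
    (∀ i, Tendsto (fun k => e k i) atTop (nhds 0)) ∧
    (∀ i, Tendsto (fun k => x k i) atTop (nhds 0)) := by
  have hs0 : ∀ k, 0 ≤ ∑ i, s k i := fun k => Finset.sum_nonneg fun i _ => (hs01 k i).1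
  have he0 : ∀ k, 0 ≤ ∑ i, e k i := fun k => Finset.sum_nonneg fun i _ => (he01 k i).1
  have hx0 : ∀ k, 0 ≤ ∑ i, x k i := fun k => Finset.sum_nonneg fun i _ => (hx01 k i).1
  -- E → 0 via A = S + E
  have hEtend : Tendsto (fun k => ∑ i, e k i) atTop (nhds 0) := by
    refine key_vanish h σmin hh hσmin
      (fun k => (∑ i, s k i) + ∑ i, e k i)
      (fun k => ∑ i, σ k i * e k i)
      (fun k => ∑ i, e k i) (fun k => by rw [hS k, hE k]; ring)
      (fun k => add_nonneg (hs0 k) (he0 k)) he0 (fun k => ?_)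
    rw [Finset.mul_sum]
    exact Finset.sum_le_sum fun i _ =>
      mul_le_mul_of_nonneg_right (hσlow k i) (he01 k i).1
  -- X → 0 via A = S + E + X
  have hXtend : Tendsto (fun k => ∑ i, x k i) atTop (nhds 0) := by
    refine key_vanish h δmin hh hδmin
      (fun k => (∑ i, s k i) + (∑ i, e k i) + ∑ i, x k i)
      (fun k => ∑ i, δ k i * x k i)
      (fun k => ∑ i, x k i) (fun k => by rw [hS k, hE k, hX k]; ring)
      (fun k => add_nonneg (add_nonneg (hs0 k) (he0 k)) (hx0 k)) hx0 (fun k => ?_)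
    rw [Finset.mul_sum]
    exact Finset.sum_le_sum fun i _ =>
      mul_le_mul_of_nonneg_right (hδlow k i) (hx01 k i).1
  refine ⟨hEtend, hXtend, fun i => ?_, fun i => ?_⟩
  · exact squeeze_zero (fun k => (he01 k i).1)
      (fun k => Finset.single_le_sum (fun j _ => (he01 k j).1) (Finset.mem_univ i)) hEtend
  · exact squeeze_zero (fun k => (hx01 k i).1)
      (fun k => Finset.single_le_sum (fun j _ => (hx01 k j).1) (Finset.mem_univ i)) hXtend
end

section
/- Consider the time-varying linear consensus system s^{k+1} = L^k s^k where each L^k is row-stochastic, has diagonal entries bounded below by a uniform positive constant y, has every nonzero off-diagonal entry bounded below by y, and the union graph over every window of K consecutive steps is strongly connected. Then all components of s^k converge to a common limit α, i.e., lim_{k→∞} s_i^k = α for all i. -/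
open Filter Matrix

namespace TVC

variable {n : ℕ}

/-- Product of the matrices `L (a+t-1) * ⋯ * L a`. -/
def Q (L : ℕ → Matrix (Fin n) (Fin n) ℝ) (a : ℕ) : ℕ → Matrix (Fin n) (Fin n) ℝ
  | 0 => 1
  | t+1 => L (a+t) * Q L a t

variable {L : ℕ → Matrix (Fin n) (Fin n) ℝ}

lemma Q_nonneg (hpos : ∀ k i j, 0 ≤ L k i j) (a t : ℕ) (i j : Fin n) :
    0 ≤ Q L a t i j := by
  induction t generalizing i j with
  | zero =>
    simp only [Q, Matrix.one_apply]
    split <;> norm_num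
  | succ t ih =>
    simp only [Q, Matrix.mul_apply]
    exact Finset.sum_nonneg fun l _ => mul_nonneg (hpos _ _ _) (ih _ _)

lemma Q_row (hpos : ∀ k i j, 0 ≤ L k i j) (hrow : ∀ k i, ∑ j, L k i j = 1)
    (a t : ℕ) (i : Fin n) : ∑ j, Q L a t i j = 1 := by
  induction t generalizing i with
  | zero => simp [Q, Matrix.one_apply]
  | succ t ih =>
    simp only [Q, Matrix.mul_apply]
    rw [Finset.sum_comm]
    calc ∑ l, ∑ j, L (a+t) i l * Q L a t l j
        = ∑ l, L (a+t) i l * ∑ j, Q L a t l j := by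
          simp [Finset.mul_sum]
      _ = 1 := by simp [ih, hrow]

lemma Q_comp (a t u : ℕ) : Q L a (t + u) = Q L (a + t) u * Q L a t := by
  induction u with
  | zero => simp [Q]
  | succ u ih =>
    show L (a + (t+u)) * Q L a (t+u) = _
    simp only [Q, ih, Matrix.mul_assoc, Nat.add_assoc]

lemma Q_lb {y : ℝ} (hy : 0 ≤ y) (hlb : ∀ k i j, 0 < L k i j → y ≤ L k i j)
    (hpos : ∀ k i j, 0 ≤ L k i j) (a t : ℕ) (i j : Fin n)
    (h : 0 < Q L a t i j) : y ^ t ≤ Q L a t i j := by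
  induction t generalizing i j with
  | zero =>
    rcases eq_or_ne i j with rfl | hne
    · simp [Q]
    · simp [Q, Matrix.one_apply, hne] at h
  | succ t ih =>
    simp only [Q, Matrix.mul_apply] at h ⊢
    obtain ⟨l, -, hl⟩ := Finset.exists_lt_of_sum_lt (by simpa using h :
      ∑ _l : Fin n, (0:ℝ) < ∑ l, L (a+t) i l * Q L a t l j)
    have hL : 0 < L (a+t) i l := by
      rcases (hpos (a+t) i l).lt_or_eq with h' | h'
      · exact h'
      · simp [← h'] at hl
    have hQ : 0 < Q L a t l j := by
      by_contra h'
      have : Q L a t l j = 0 := le_antisymm (not_lt.mp h') (Q_nonneg hpos a t l j)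
      simp [this] at hl
    calc y ^ (t+1) = y * y ^ t := by ring
      _ ≤ L (a+t) i l * Q L a t l j :=
          mul_le_mul (hlb _ _ _ hL) (ih _ _ hQ) (pow_nonneg hy t) ((hpos _ _ _))
      _ ≤ ∑ l, L (a+t) i l * Q L a t l j :=
          Finset.single_le_sum (f := fun x => L (a+t) i x * Q L a t x j)
            (fun x _ => mul_nonneg (hpos _ _ _) (Q_nonneg hpos a t x j)) (Finset.mem_univ l)

lemma Q_entry_ge (hpos : ∀ k i j, 0 ≤ L k i j) (a t : ℕ) (i j l : Fin n) :
    L (a+t) i l * Q L a t l j ≤ Q L a (t+1) i j := by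
  simp only [Q, Matrix.mul_apply]
  exact Finset.single_le_sum (f := fun x => L (a+t) i x * Q L a t x j)
    (fun x _ => mul_nonneg (hpos _ _ _) (Q_nonneg hpos a t x j)) (Finset.mem_univ l)

lemma Q_diag_pos (hpos : ∀ k i j, 0 ≤ L k i j) (hdiag : ∀ k i, 0 < L k i i)
    (a t : ℕ) (i : Fin n) : 0 < Q L a t i i := by
  induction t with
  | zero => simp [Q]
  | succ t ih =>
    exact lt_of_lt_of_le (mul_pos (hdiag _ _) ih) (Q_entry_ge hpos a t i i i)

lemma Q_mono (hpos : ∀ k i j, 0 ≤ L k i j) (hdiag : ∀ k i, 0 < L k i i)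
    {a t u : ℕ} (htu : t ≤ u) {i j : Fin n} (h : 0 < Q L a t i j) :
    0 < Q L a u i j := by
  obtain ⟨r, rfl⟩ := Nat.exists_eq_add_of_le htu
  induction r with
  | zero => simpa using h
  | succ r ih =>
    have := ih (Nat.le_add_right _ _)
    calc (0:ℝ) < L (a+(t+r)) i i * Q L a (t+r) i j := mul_pos (hdiag _ _) this
      _ ≤ Q L a (t+r+1) i j := Q_entry_ge hpos a (t+r) i j i

lemma Q_edge (hpos : ∀ k i j, 0 ≤ L k i j) (hdiag : ∀ k i, 0 < L k i i)
    {a m u : ℕ} (h1 : a ≤ m) (h2 : m < a + u) {i j : Fin n}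
    (hij : 0 < L m i j) : 0 < Q L a u i j := by
  obtain ⟨t, rfl⟩ := Nat.exists_eq_add_of_le h1
  have key : 0 < Q L a (t+1) i j := by
    calc (0:ℝ) < L (a+t) i j * Q L a t j j := mul_pos hij (Q_diag_pos hpos hdiag a t j)
      _ ≤ Q L a (t+1) i j := Q_entry_ge hpos a t i j j
  exact Q_mono hpos hdiag (by omega) key


lemma mul_apply_ge {A B : Matrix (Fin n) (Fin n) ℝ}
    (hA : ∀ i j, 0 ≤ A i j) (hB : ∀ i j, 0 ≤ B i j) (i j l : Fin n) :
    A i l * B l j ≤ (A * B) i j := by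
  simp only [Matrix.mul_apply]
  exact Finset.single_le_sum (f := fun x => A i x * B x j)
    (fun x _ => mul_nonneg (hA _ _) (hB _ _)) (Finset.mem_univ l)

lemma Q_allpos {K : ℕ} (hK : 0 < K) (hn : 0 < n)
    (hpos : ∀ k i j, 0 ≤ L k i j) (hdiag : ∀ k i, 0 < L k i i)
    (hconn : ∀ k : ℕ, ∀ i j : Fin n,
      Relation.ReflTransGen
        (fun a b : Fin n => a ≠ b ∧ ∃ m, k ≤ m ∧ m < k + K ∧ 0 < L m a b) i j)
    (a : ℕ) (i j : Fin n) : 0 < Q L a ((n-1)*K) i j := by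
  classical
  have claim : ∀ t a (j : Fin n),
      min n (t+1) ≤ (Finset.univ.filter fun i => 0 < Q L a (t*K) i j).card := by
    intro t
    induction t with
    | zero =>
      intro a j
      have hj : j ∈ (Finset.univ.filter fun i => 0 < Q L a (0*K) i j) := by
        simp only [Finset.mem_filter, Finset.mem_univ, true_and, Nat.zero_mul]
        exact Q_diag_pos hpos hdiag a 0 j
      exact le_trans (min_le_right _ _) (Finset.card_pos.mpr ⟨j, hj⟩).nat_succ_le
    | succ t ih =>
      intro a j
      set S := (Finset.univ.filter fun i => 0 < Q L a (t*K) i j) with hS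
      set S' := (Finset.univ.filter fun i => 0 < Q L a ((t+1)*K) i j) with hS'
      have hcompQ : Q L a ((t+1)*K) = Q L (a + t*K) K * Q L a (t*K) := by
        have : (t+1)*K = t*K + K := by ring
        rw [this, Q_comp]
      have hsub : S ⊆ S' := by
        intro x hx
        simp only [hS, Finset.mem_filter, Finset.mem_univ, true_and] at hx
        simp only [hS', Finset.mem_filter, Finset.mem_univ, true_and, hcompQ]
        calc (0:ℝ) < Q L (a + t*K) K x x * Q L a (t*K) x j :=
              mul_pos (Q_diag_pos hpos hdiag _ _ _) hx
          _ ≤ _ := mul_apply_ge (Q_nonneg hpos _ _) (Q_nonneg hpos _ _) _ _ _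
      by_cases hfull : S = Finset.univ
      · have : (n:ℕ) ≤ S'.card := by
          have := Finset.card_le_card hsub
          rw [hfull, Finset.card_univ, Fintype.card_fin] at this
          exact this
        exact le_trans (min_le_left _ _) this
      · obtain ⟨i0, hi0⟩ : ∃ i0, i0 ∉ S := by
          by_contra hc
          push_neg at hc
          exact hfull (Finset.eq_univ_iff_forall.mpr hc)
        have hjS : j ∈ S := by
          simp only [hS, Finset.mem_filter, Finset.mem_univ, true_and]
          exact Q_diag_pos hpos hdiag _ _ _
        have cross : ∃ p q, p ∉ S ∧ q ∈ S ∧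
            ∃ m, a + t*K ≤ m ∧ m < a + t*K + K ∧ 0 < L m p q := by
          have main : ∀ (x : Fin n), Relation.ReflTransGen
              (fun u v : Fin n => u ≠ v ∧ ∃ m, a + t*K ≤ m ∧ m < a + t*K + K ∧ 0 < L m u v) x j →
              x ∉ S → ∃ p q, p ∉ S ∧ q ∈ S ∧
                ∃ m, a + t*K ≤ m ∧ m < a + t*K + K ∧ 0 < L m p q := by
            intro x hx
            induction hx using Relation.ReflTransGen.head_induction_on with
            | refl => intro hxS; exact absurd hjS hxS
            | @head u c h' hrest ih =>
              intro hxS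
              by_cases hc : c ∈ S
              · exact ⟨u, c, hxS, hc, h'.2⟩
              · exact ih hc
          exact main i0 (hconn (a + t*K) i0 j) hi0
        obtain ⟨p, q, hp, hq, m, hm1, hm2, hLm⟩ := cross
        have hpS' : p ∈ S' := by
          simp only [hS', Finset.mem_filter, Finset.mem_univ, true_and, hcompQ]
          have hW : 0 < Q L (a + t*K) K p q := Q_edge hpos hdiag hm1 hm2 hLm
          have hQq : 0 < Q L a (t*K) q j := by
            have := Finset.mem_filter.mp hq
            exact this.2
          calc (0:ℝ) < Q L (a + t*K) K p q * Q L a (t*K) q j := mul_pos hW hQq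
            _ ≤ _ := mul_apply_ge (Q_nonneg hpos _ _) (Q_nonneg hpos _ _) _ _ _
        have hcard : S.card + 1 ≤ S'.card := by
          have hins : insert p S ⊆ S' := Finset.insert_subset hpS' hsub
          have h2 := Finset.card_le_card hins
          rwa [Finset.card_insert_of_notMem hp] at h2
        have hih : min n (t+1) ≤ S.card := by rw [hS]; exact ih a j
        omega
  have h := claim (n-1) a j
  have hmin : min n ((n-1)+1) = n := by omega
  rw [hmin] at h
  have heq : (Finset.univ.filter fun i => 0 < Q L a ((n-1)*K) i j) = Finset.univ := by
    apply Finset.eq_univ_of_card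
    have h1 := Finset.card_le_univ (Finset.univ.filter fun i => 0 < Q L a ((n-1)*K) i j)
    simp only [Fintype.card_fin] at h1 ⊢
    omega
  have hi : i ∈ (Finset.univ.filter fun i => 0 < Q L a ((n-1)*K) i j) := by
    rw [heq]; exact Finset.mem_univ i
  exact (Finset.mem_filter.mp hi).2


lemma spread_contract (hne : (Finset.univ : Finset (Fin n)).Nonempty)
    {A : Matrix (Fin n) (Fin n) ℝ} {δ : ℝ} (hδ : 0 ≤ δ)
    (hA : ∀ i j, δ ≤ A i j) (hrowA : ∀ i, ∑ j, A i j = 1) (v : Fin n → ℝ) :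
    Finset.univ.sup' hne (A.mulVec v) - Finset.univ.inf' hne (A.mulVec v) ≤
      (1 - 2*δ) * (Finset.univ.sup' hne v - Finset.univ.inf' hne v) := by
  classical
  set M := Finset.univ.sup' hne v with hM
  set m := Finset.univ.inf' hne v with hm
  obtain ⟨j0, -, hj0⟩ := Finset.exists_mem_eq_inf' hne v
  obtain ⟨j1, -, hj1⟩ := Finset.exists_mem_eq_sup' hne v
  have hmM : m ≤ M :=
    le_trans (Finset.inf'_le v (Finset.mem_univ j0)) (Finset.le_sup' v (Finset.mem_univ j0))
  rw [← hm] at hj0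
  rw [← hM] at hj1
  have hApos : ∀ i j, (0:ℝ) ≤ A i j := fun i j => le_trans hδ (hA i j)
  have hvM : ∀ j, v j ≤ M := fun j => Finset.le_sup' _ (Finset.mem_univ j)
  have hvm : ∀ j, m ≤ v j := fun j => Finset.inf'_le _ (Finset.mem_univ j)
  have upper : ∀ i, A.mulVec v i ≤ M - δ * (M - m) := by
    intro i
    have expand : A.mulVec v i = ∑ j, A i j * v j := rfl
    rw [expand]
    calc ∑ j, A i j * v j
        = ∑ j ∈ Finset.univ.erase j0, A i j * v j + A i j0 * v j0 :=
          (Finset.sum_erase_add _ _ (Finset.mem_univ j0)).symm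
      _ ≤ ∑ j ∈ Finset.univ.erase j0, A i j * M + A i j0 * m := by
          refine add_le_add (Finset.sum_le_sum fun j _ =>
            mul_le_mul_of_nonneg_left (hvM j) (hApos i j)) (le_of_eq ?_)
          rw [hj0]
      _ = (∑ j, A i j * M) - A i j0 * M + A i j0 * m := by
          rw [← Finset.sum_erase_add Finset.univ _ (Finset.mem_univ j0)]; ring
      _ = M - A i j0 * (M - m) := by rw [← Finset.sum_mul, hrowA i]; ring
      _ ≤ M - δ * (M - m) := by nlinarith [hA i j0, sub_nonneg.mpr hmM]
  have lower : ∀ i, m + δ * (M - m) ≤ A.mulVec v i := by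
    intro i
    have expand : A.mulVec v i = ∑ j, A i j * v j := rfl
    rw [expand]
    calc m + δ * (M - m)
        ≤ m + A i j1 * (M - m) := by nlinarith [hA i j1, sub_nonneg.mpr hmM]
      _ = (∑ j, A i j * m) - A i j1 * m + A i j1 * M := by
          rw [← Finset.sum_mul, hrowA i]; ring
      _ = ∑ j ∈ Finset.univ.erase j1, A i j * m + A i j1 * M := by
          rw [← Finset.sum_erase_add Finset.univ _ (Finset.mem_univ j1)]; ring
      _ ≤ ∑ j ∈ Finset.univ.erase j1, A i j * v j + A i j1 * v j1 := by
          refine add_le_add (Finset.sum_le_sum fun j _ =>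
            mul_le_mul_of_nonneg_left (hvm j) (hApos i j)) (le_of_eq ?_)
          rw [hj1]
      _ = ∑ j, A i j * v j := Finset.sum_erase_add _ _ (Finset.mem_univ j1)
  have h1 : Finset.univ.sup' hne (A.mulVec v) ≤ M - δ * (M - m) :=
    Finset.sup'_le _ _ fun i _ => upper i
  have h2 : m + δ * (M - m) ≤ Finset.univ.inf' hne (A.mulVec v) :=
    Finset.le_inf' _ _ fun i _ => lower i
  nlinarith [h1, h2]

end TVC

/-- discrete-time consensus for time-varying row-stochastic matrices
with uniformly positive entries and K-strongly-connected union graphs. -/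
theorem time_varying_consensus
    (n K : ℕ) (hK : 0 < K) (y : ℝ) (hy : 0 < y)
    (L : ℕ → Matrix (Fin n) (Fin n) ℝ)
    (hdiag : ∀ k i, y ≤ L k i i)
    (hentries : ∀ k i j, L k i j = 0 ∨ (y ≤ L k i j ∧ L k i j ≤ 1))
    (hrow : ∀ k i, ∑ j, L k i j = 1)
    -- K-strong connectivity of the union graphs
    (hconn : ∀ k : ℕ, ∀ i j : Fin n,
      Relation.ReflTransGen
        (fun a b : Fin n => a ≠ b ∧ ∃ m, k ≤ m ∧ m < k + K ∧ 0 < L m a b) i j)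
    (s : ℕ → Fin n → ℝ)
    (hdyn : ∀ k, s (k+1) = (L k).mulVec (s k)) :
    ∃ α : ℝ, ∀ i, Tendsto (fun k => s k i) atTop (nhds α) := by
  classical
  rcases Nat.eq_zero_or_pos n with hn | hn
  · subst hn; exact ⟨0, fun i => i.elim0⟩
  have hne : (Finset.univ : Finset (Fin n)).Nonempty := ⟨⟨0, hn⟩, Finset.mem_univ _⟩
  have hpos : ∀ k i j, 0 ≤ L k i j := by
    intro k i j
    rcases hentries k i j with h | h
    · rw [h]
    · linarith [h.1]
  have hdiagpos : ∀ k i, 0 < L k i i := fun k i => lt_of_lt_of_le hy (hdiag k i)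
  have hlb : ∀ k (i j : Fin n), 0 < L k i j → y ≤ L k i j := by
    intro k i j h
    rcases hentries k i j with h' | h'
    · rw [h'] at h; exact absurd h (lt_irrefl 0)
    · exact h'.1
  have hs : ∀ a t, s (a + t) = (TVC.Q L a t).mulVec (s a) := by
    intro a t
    induction t with
    | zero => simp [TVC.Q, Matrix.one_mulVec]
    | succ t ih =>
      have ha : a + (t+1) = (a+t)+1 := rfl
      rw [ha, hdyn (a+t), ih, Matrix.mulVec_mulVec]
      rfl
  set N := (n-1)*K + 1 with hN
  have hQpos : ∀ a (i j : Fin n), 0 < TVC.Q L a N i j := fun a i j =>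
    TVC.Q_mono hpos hdiagpos (Nat.le_succ _) (TVC.Q_allpos hK hn hpos hdiagpos hconn a i j)
  set δ := min (y ^ N) (1/2 : ℝ) with hδdef
  have hδpos : 0 < δ := lt_min (pow_pos hy N) (by norm_num)
  have hδhalf : δ ≤ 1/2 := min_le_right _ _
  have hQδ : ∀ a (i j : Fin n), δ ≤ TVC.Q L a N i j := fun a i j =>
    le_trans (min_le_left _ _) (TVC.Q_lb hy.le hlb hpos a N i j (hQpos a i j))
  set Mf := fun k => Finset.univ.sup' hne (s k) with hMf
  set mf := fun k => Finset.univ.inf' hne (s k) with hmf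
  set σ := fun k => Mf k - mf k with hσ
  have hsM : ∀ k i, s k i ≤ Mf k := fun k i => Finset.le_sup' _ (Finset.mem_univ i)
  have hsm : ∀ k i, mf k ≤ s k i := fun k i => Finset.inf'_le _ (Finset.mem_univ i)
  have hstep_ub : ∀ k, Mf (k+1) ≤ Mf k := by
    intro k
    apply Finset.sup'_le
    intro i _
    rw [hdyn k]
    calc (L k).mulVec (s k) i = ∑ j, L k i j * s k j := rfl
      _ ≤ ∑ j, L k i j * Mf k :=
          Finset.sum_le_sum fun j _ => mul_le_mul_of_nonneg_left (hsM k j) (hpos k i j)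
      _ = Mf k := by rw [← Finset.sum_mul, hrow k i, one_mul]
  have hstep_lb : ∀ k, mf k ≤ mf (k+1) := by
    intro k
    apply Finset.le_inf'
    intro i _
    rw [hdyn k]
    calc mf k = ∑ j, L k i j * mf k := by rw [← Finset.sum_mul, hrow k i, one_mul]
      _ ≤ ∑ j, L k i j * s k j :=
          Finset.sum_le_sum fun j _ => mul_le_mul_of_nonneg_left (hsm k j) (hpos k i j)
      _ = (L k).mulVec (s k) i := rfl
  have hManti : Antitone Mf := antitone_nat_of_succ_le hstep_ub
  have hmmono : Monotone mf := monotone_nat_of_le_succ hstep_lb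
  have hmM : ∀ k, mf k ≤ Mf k := fun k => le_trans (hsm k ⟨0, hn⟩) (hsM k ⟨0, hn⟩)
  have hσanti : Antitone σ := fun a b hab => sub_le_sub (hManti hab) (hmmono hab)
  have hσnn : ∀ k, 0 ≤ σ k := fun k => sub_nonneg.mpr (hmM k)
  set c := 1 - 2*δ with hc
  have hc0 : 0 ≤ c := by rw [hc]; linarith
  have hc1 : c < 1 := by rw [hc]; linarith
  have hcontr : ∀ a, σ (a + N) ≤ c * σ a := by
    intro a
    have h := TVC.spread_contract hne hδpos.le (hQδ a)
      (fun i => TVC.Q_row hpos hrow a N i) (s a)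
    rw [← hs a N] at h
    exact h
  have hgeom : ∀ t, σ (t * N) ≤ c ^ t * σ 0 := by
    intro t
    induction t with
    | zero => simp
    | succ t ih =>
      have hmul : (t+1) * N = t*N + N := by ring
      calc σ ((t+1)*N) = σ (t*N + N) := by rw [hmul]
        _ ≤ c * σ (t*N) := hcontr (t*N)
        _ ≤ c * (c^t * σ 0) := mul_le_mul_of_nonneg_left ih hc0
        _ = c^(t+1) * σ 0 := by ring
  have hNpos : 0 < N := Nat.succ_pos _
  have hdivtop : Tendsto (fun k => k / N) atTop atTop := by
    apply Filter.tendsto_atTop_atTop.mpr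
    intro b
    exact ⟨b * N, fun k hk => (Nat.le_div_iff_mul_le hNpos).mpr hk⟩
  have hσ0 : Tendsto σ atTop (nhds 0) := by
    refine squeeze_zero hσnn (g := fun k => c ^ (k / N) * σ 0) ?_ ?_
    · intro k
      calc σ k ≤ σ (k / N * N) := hσanti (Nat.div_mul_le_self k N)
        _ ≤ c ^ (k/N) * σ 0 := hgeom (k/N)
    · have h := (tendsto_pow_atTop_nhds_zero_of_lt_one hc0 hc1).comp hdivtop
      simpa using h.mul_const (σ 0)
  have hbdd : BddBelow (Set.range Mf) := by
    refine ⟨mf 0, ?_⟩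
    rintro x ⟨k, rfl⟩
    exact le_trans (hmmono (Nat.zero_le k)) (hmM k)
  have hMlim : Tendsto Mf atTop (nhds (⨅ k, Mf k)) := tendsto_atTop_ciInf hManti hbdd
  refine ⟨⨅ k, Mf k, fun i => ?_⟩
  have hmlim : Tendsto mf atTop (nhds (⨅ k, Mf k)) := by
    have heq : mf = fun k => Mf k - σ k := by funext k; simp [hσ]
    rw [heq]
    simpa using hMlim.sub hσ0
  exact tendsto_of_tendsto_of_tendsto_of_le_of_le hmlim hMlim (fun k => hsm k i)
    (fun k => hsM k i)
end
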